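/- Let X be a Banach space with operators A, (B_n), iterates x_n = B_{n-1}(x_n) for n ≥ 1, ‖A(x_0) − x_0‖ ≤ ε, ‖A(x_n) − B_n(x_n)‖ ≤ ε_n, each B_n being M_{n}-Lipschitz, A and B_n differentiable with K- and K_n-Lipschitz derivatives on a convex set containing all iterates, and ‖A'(x_0) − B'_{n-1}(x_0)‖ ≤ γ_{n-1}. Then for all n ≥ 1, with r̃_n = ‖x_n − x_0‖: r̃_n ≤ M_{n-1} r̃_n + (1/2)(K + K_{n-1}) r̃_{n-1}² + γ_{n-1} r̃_{n-1} + ε + ε_{n-1}. -/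

import Mathlib

open Set

lemma taylor_quad {X : Type*} [NormedAddCommGroup X] [NormedSpace ℝ X]
    {f : X → X} {f' : X → X →L[ℝ] X} {S : Set X} (hS : Convex ℝ S)
    (hf : ∀ z ∈ S, HasFDerivWithinAt f (f' z) S z) {L : ℝ} (hL : 0 ≤ L)
    (hLip : ∀ u ∈ S, ∀ v ∈ S, ‖f' u - f' v‖ ≤ L * ‖u - v‖)
    {a b : X} (ha : a ∈ S) (hb : b ∈ S) :
    ‖f b - f a - f' a (b - a)‖ ≤ L / 2 * ‖b - a‖ ^ 2 := by
  set v := b - a with hv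
  set c : ℝ → X := fun t => a + t • v with hc
  have hmem : ∀ t ∈ Icc (0:ℝ) 1, c t ∈ S := by
    intro t ht
    have : c t = (1 - t) • a + t • b := by
      simp only [hc, hv]; module
    rw [this]
    exact hS ha hb (by linarith [ht.2]) ht.1 (by ring)
  set h : ℝ → X := fun t => f (c t) - f a - t • (f' a v) with hh
  set h' : ℝ → X := fun t => f' (c t) v - f' a v with hh'
  have hcd : ∀ t : ℝ, HasDerivWithinAt c v (Icc 0 1) t := by
    intro t
    simpa [hc] using ((hasDerivWithinAt_id t (Icc (0:ℝ) 1)).smul_const v).const_add a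
  have hderiv : ∀ t ∈ Icc (0:ℝ) 1, HasDerivWithinAt h (h' t) (Icc 0 1) t := by
    intro t ht
    have h1 : HasDerivWithinAt (fun t => f (c t)) (f' (c t) v) (Icc 0 1) t :=
      (hf (c t) (hmem t ht)).comp_hasDerivWithinAt t (hcd t) (fun s hs => hmem s hs)
    have h2 : HasDerivWithinAt (fun t : ℝ => f a + t • (f' a v)) (f' a v) (Icc 0 1) t := by
      simpa using ((hasDerivWithinAt_id t (Icc (0:ℝ) 1)).smul_const (f' a v)).const_add (f a)
    have := h1.sub h2
    simpa [hh, hh', sub_sub, Pi.sub_def] using this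
  have hderiv' : ∀ t ∈ Ico (0:ℝ) 1, HasDerivWithinAt h (h' t) (Ici t) t := by
    intro t ht
    exact (hderiv t (Ico_subset_Icc_self ht)).mono_of_mem_nhdsWithin
      (Icc_mem_nhdsGE_of_mem ht)
  have hbound : ∀ t ∈ Ico (0:ℝ) 1, ‖h' t‖ ≤ L * ‖v‖ ^ 2 * t := by
    intro t ht
    have hct : c t - a = t • v := by simp [hc]
    calc ‖h' t‖ = ‖(f' (c t) - f' a) v‖ := by simp [hh']
      _ ≤ ‖f' (c t) - f' a‖ * ‖v‖ := (f' (c t) - f' a).le_opNorm v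
      _ ≤ (L * ‖c t - a‖) * ‖v‖ := by
          gcongr; exact hLip _ (hmem t (Ico_subset_Icc_self ht)) a ha
      _ = L * ‖v‖ ^ 2 * t := by
          rw [hct, norm_smul, Real.norm_eq_abs, abs_of_nonneg ht.1]; ring
  set Bf : ℝ → ℝ := fun t => L * ‖v‖ ^ 2 * t ^ 2 / 2 with hBf
  have hBd : ∀ t : ℝ, HasDerivAt Bf (L * ‖v‖ ^ 2 * t) t := by
    intro t
    have := ((hasDerivAt_pow 2 t).const_mul (L * ‖v‖ ^ 2)).div_const 2
    simpa [hBf, mul_comm, mul_assoc, mul_left_comm] using this.congr_deriv (by ring)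
  have key := image_norm_le_of_norm_deriv_right_le_deriv_boundary
    (fun t ht => (hderiv t ht).continuousWithinAt) hderiv'
    (by simp [hh, hc, hBf] : ‖h 0‖ ≤ Bf 0) hBd hbound
    (right_mem_Icc.2 zero_le_one)
  have : h 1 = f b - f a - f' a (b - a) := by simp [hh, hc, hv]
  rw [← this]
  calc ‖h 1‖ ≤ Bf 1 := key
    _ = L / 2 * ‖b - a‖ ^ 2 := by simp [hBf, hv]; ring


/-- Modified Newton–Kantorovich estimate:
r̃_n ≤ M_{n−1} r̃_n + (1/2)(K + K_{n−1}) r̃_{n−1}² + γ_{n−1} r̃_{n−1} + ε + ε_{n−1}. -/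
theorem stmt_7 {X : Type*} [NormedAddCommGroup X] [NormedSpace ℝ X] [CompleteSpace X]
    (A : X → X) (B : ℕ → X → X) (A' : X → X →L[ℝ] X) (B' : ℕ → X → X →L[ℝ] X)
    (x : ℕ → X) (S : Set X)
    (K ε : ℝ) (Mn Kn εn γn : ℕ → ℝ)
    (hK : 0 ≤ K) (hε : 0 ≤ ε) (hMn : ∀ n, 0 ≤ Mn n) (hKn : ∀ n, 0 ≤ Kn n)
    (hεn : ∀ n, 0 ≤ εn n) (hγn : ∀ n, 0 ≤ γn n)
    (hS : Convex ℝ S) (hxS : ∀ n, x n ∈ S)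
    (hfix : ∀ n : ℕ, 1 ≤ n → x n = B (n - 1) (x n))
    (hx0 : ‖A (x 0) - x 0‖ ≤ ε)
    (happrox : ∀ n, ‖A (x n) - B n (x n)‖ ≤ εn n)
    (hBLip : ∀ n, ∀ x' ∈ S, ∀ y ∈ S, ‖B n x' - B n y‖ ≤ Mn n * ‖x' - y‖)
    (hA : ∀ x' ∈ S, HasFDerivWithinAt A (A' x') S x')
    (hB : ∀ n, ∀ x' ∈ S, HasFDerivWithinAt (B n) (B' n x') S x')
    (hA'Lip : ∀ x' ∈ S, ∀ y ∈ S, ‖A' x' - A' y‖ ≤ K * ‖x' - y‖)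
    (hB'Lip : ∀ n, ∀ x' ∈ S, ∀ y ∈ S, ‖B' n x' - B' n y‖ ≤ Kn n * ‖x' - y‖)
    (hγ : ∀ n : ℕ, 1 ≤ n → ‖A' (x 0) - B' (n - 1) (x 0)‖ ≤ γn (n - 1)) :
    ∀ n : ℕ, 1 ≤ n →
      ‖x n - x 0‖ ≤ Mn (n - 1) * ‖x n - x 0‖
        + (1 / 2) * (K + Kn (n - 1)) * ‖x (n - 1) - x 0‖ ^ 2
        + γn (n - 1) * ‖x (n - 1) - x 0‖ + ε + εn (n - 1) := by
    intro n hn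
    obtain ⟨m, rfl⟩ : ∃ m, n = m + 1 := ⟨n - 1, (Nat.succ_pred_eq_of_pos hn).symm⟩
    simp only [Nat.add_sub_cancel]
    have hfx : x (m + 1) = B m (x (m + 1)) := by
      have := hfix (m + 1) (by omega)
      simpa using this
    have hid : x (m + 1) - x 0 =
        (B m (x (m + 1)) - B m (x 0))
        + -(B m (x m) - B m (x 0) - B' m (x 0) (x m - x 0))
        + (A (x m) - A (x 0) - A' (x 0) (x m - x 0))
        + (A' (x 0) - B' m (x 0)) (x m - x 0)
        + (B m (x m) - A (x m))
        + (A (x 0) - x 0) := by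
      have hev : (A' (x 0) - B' m (x 0)) (x m - x 0)
          = A' (x 0) (x m - x 0) - B' m (x 0) (x m - x 0) := by simp
      rw [hev]
      nth_rewrite 1 [hfx]
      abel
    have H : ‖x (m + 1) - x 0‖ ≤
        ‖B m (x (m + 1)) - B m (x 0)‖
        + ‖B m (x m) - B m (x 0) - B' m (x 0) (x m - x 0)‖
        + ‖A (x m) - A (x 0) - A' (x 0) (x m - x 0)‖
        + ‖(A' (x 0) - B' m (x 0)) (x m - x 0)‖
        + ‖B m (x m) - A (x m)‖
        + ‖A (x 0) - x 0‖ := by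
      rw [hid]
      refine le_trans (norm_add_le _ _) (add_le_add ?_ le_rfl)
      refine le_trans (norm_add_le _ _) (add_le_add ?_ le_rfl)
      refine le_trans (norm_add_le _ _) (add_le_add ?_ le_rfl)
      refine le_trans (norm_add_le _ _) (add_le_add ?_ le_rfl)
      exact le_trans (norm_add_le _ _) (add_le_add le_rfl (norm_neg _).le)
    have b1 : ‖B m (x (m + 1)) - B m (x 0)‖ ≤ Mn m * ‖x (m + 1) - x 0‖ :=
      hBLip m _ (hxS (m + 1)) _ (hxS 0)
    have b2 : ‖B m (x m) - B m (x 0) - B' m (x 0) (x m - x 0)‖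
        ≤ Kn m / 2 * ‖x m - x 0‖ ^ 2 :=
      taylor_quad hS (hB m) (hKn m) (hB'Lip m) (hxS 0) (hxS m)
    have b3 : ‖A (x m) - A (x 0) - A' (x 0) (x m - x 0)‖ ≤ K / 2 * ‖x m - x 0‖ ^ 2 :=
      taylor_quad hS hA hK hA'Lip (hxS 0) (hxS m)
    have b4 : ‖(A' (x 0) - B' m (x 0)) (x m - x 0)‖ ≤ γn m * ‖x m - x 0‖ := by
      have hg := hγ (m + 1) (by omega)
      simp only [Nat.add_sub_cancel] at hg
      calc ‖(A' (x 0) - B' m (x 0)) (x m - x 0)‖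
          ≤ ‖A' (x 0) - B' m (x 0)‖ * ‖x m - x 0‖ := (A' (x 0) - B' m (x 0)).le_opNorm _
        _ ≤ γn m * ‖x m - x 0‖ := by gcongr
    have b5 : ‖B m (x m) - A (x m)‖ ≤ εn m := by
      rw [norm_sub_rev]; exact happrox m
    nlinarith [H, b1, b2, b3, b4, b5, hx0]
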